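/- Let h: ℝ₊ → ℝ₊ be bounded and measurable, t > 0 and r ∈ [0, 1/2). Then the function ψ(s) = (1/2π) ∫₀^∞ h(τ) e^{-tτ} s^{-r} / (τ+s) dτ satisfies ‖ψ‖_{L²(ℝ₊)} ≤ C t^{r - 1/2} for a constant C depending only on ‖h‖_∞ and r. -/

import Mathlib

open MeasureTheory Real Set Filter

lemma exp_le_rpow_neg {a x : ℝ} (ha : 0 < a) (ha1 : a ≤ 1) (hx : 0 < x) :
    Real.exp (-x) ≤ x ^ (-a) := by
  have hxa : 0 < x ^ a := Real.rpow_pos_of_pos hx a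
  rw [Real.rpow_neg hx.le]
  rcases le_or_gt x 1 with h | h
  · have h1 : x ^ a ≤ 1 := Real.rpow_le_one hx.le h ha.le
    have h2 : Real.exp (-x) ≤ 1 := by rw [Real.exp_le_one_iff]; linarith
    calc Real.exp (-x) ≤ 1 := h2
      _ ≤ (x ^ a)⁻¹ := by rw [le_inv_comm₀ one_pos hxa]; simpa using h1
  · have h1 : x ^ a ≤ x := by
      calc x ^ a ≤ x ^ (1:ℝ) := Real.rpow_le_rpow_of_exponent_le h.le ha1
        _ = x := Real.rpow_one x
    have h2 : x ≤ Real.exp x := (Real.add_one_le_exp x).trans' (by linarith)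
    rw [Real.exp_neg]
    exact inv_anti₀ hxa (h1.trans h2)

lemma key_pointwise {M r t s a : ℝ} (hM : 0 ≤ M) (ht : 0 < t) (hs : 0 < s)
    (ha : 0 < a) (ha1 : a < 1) {h : ℝ → ℝ}
    (hh : ∀ τ : ℝ, 0 < τ → 0 ≤ h τ ∧ h τ ≤ M) :
    ‖∫ τ in Set.Ioi (0:ℝ), h τ * Real.exp (-t * τ) * s ^ (-r) / (τ + s)‖
      ≤ (M * (1/(1-a) + 1/a)) * t ^ (-a) * s ^ (-r) * s ^ (-a) := by
  have h1a : (0:ℝ) < 1 - a := by linarith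
  set G : ℝ → ℝ := fun τ => if τ ≤ s then s⁻¹ * τ ^ (-a) else τ ^ (-(a+1)) with hG
  set H : ℝ → ℝ := fun τ => M * t ^ (-a) * s ^ (-r) * G τ with hH
  -- integrability on the two pieces
  have hIoc : IntegrableOn (fun τ : ℝ => s⁻¹ * τ ^ (-a)) (Ioc 0 s) volume := by
    have := (intervalIntegral.intervalIntegrable_rpow' (a := 0) (b := s)
      (r := -a) (by linarith)).1
    exact this.const_mul _
  have hIoi : IntegrableOn (fun τ : ℝ => τ ^ (-(a+1))) (Ioi s) volume :=
    integrableOn_Ioi_rpow_of_lt (by linarith) hs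
  have hGIoc : IntegrableOn G (Ioc 0 s) volume :=
    hIoc.congr_fun (fun τ hτ => by simp [hG, hτ.2]) measurableSet_Ioc
  have hGIoi : IntegrableOn G (Ioi s) volume :=
    hIoi.congr_fun (fun τ hτ => by simp [hG, not_le.mpr (mem_Ioi.mp hτ)]) measurableSet_Ioi
  have hunion : Ioc (0:ℝ) s ∪ Ioi s = Ioi 0 := Set.Ioc_union_Ioi_eq_Ioi hs.le
  have hGint : IntegrableOn G (Ioi 0) volume := by
    rw [← hunion]; exact hGIoc.union hGIoi
  have hHint : IntegrableOn H (Ioi 0) volume := hGint.const_mul _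
  -- value of the integral of G
  have hGval : ∫ τ in Ioi (0:ℝ), G τ = (1/(1-a) + 1/a) * s ^ (-a) := by
    rw [← hunion, setIntegral_union (Set.Ioc_disjoint_Ioi le_rfl) measurableSet_Ioi hGIoc hGIoi]
    have e1 : ∫ τ in Ioc (0:ℝ) s, G τ = s⁻¹ * ∫ τ in Ioc (0:ℝ) s, τ ^ (-a) := by
      rw [setIntegral_congr_fun measurableSet_Ioc (fun τ hτ => by simp [hG, hτ.2] : EqOn G (fun τ => s⁻¹ * τ ^ (-a)) (Ioc 0 s))]
      exact integral_const_mul _ _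
    have e2 : ∫ τ in Ioc (0:ℝ) s, τ ^ (-a) = s ^ (1-a) / (1-a) := by
      rw [← intervalIntegral.integral_of_le hs.le,
        integral_rpow (Or.inl (by linarith : (-1:ℝ) < -a))]
      rw [Real.zero_rpow (by linarith : -a + 1 ≠ 0)]
      ring_nf
    have e3 : ∫ τ in Ioi s, G τ = s ^ (-a) / a := by
      rw [setIntegral_congr_fun measurableSet_Ioi (fun τ hτ => by
        simp [hG, not_le.mpr (mem_Ioi.mp hτ)] : EqOn G (fun τ => τ ^ (-(a+1))) (Ioi s))]
      rw [integral_Ioi_rpow_of_lt (by linarith) hs]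
      have : -(a+1) + 1 = -a := by ring
      rw [this, neg_div_neg_eq]
    rw [e1, e2, e3]
    have e4 : s⁻¹ * (s ^ (1-a) / (1-a)) = s ^ (-a) / (1-a) := by
      have : s ^ (1-a) = s * s ^ (-a) := by
        rw [show (1:ℝ) - a = 1 + (-a) by ring, Real.rpow_add hs, Real.rpow_one]
      rw [this]; field_simp
    rw [e4]; field_simp
  -- pointwise bound
  have hbound : ∀ᵐ τ ∂(volume.restrict (Ioi (0:ℝ))),
      ‖h τ * Real.exp (-t * τ) * s ^ (-r) / (τ + s)‖ ≤ H τ := by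
    filter_upwards [ae_restrict_mem measurableSet_Ioi] with τ hτ
    have hτ0 : 0 < τ := hτ
    have hτs : 0 < τ + s := by linarith
    have hhτ := hh τ hτ0
    have hh1 : 0 ≤ h τ := hhτ.1
    have hsr : (0:ℝ) ≤ s ^ (-r) := (Real.rpow_pos_of_pos hs _).le
    have hF0 : 0 ≤ h τ * Real.exp (-t * τ) * s ^ (-r) / (τ + s) := by positivity
    rw [Real.norm_of_nonneg hF0]
    have hexp : Real.exp (-t * τ) ≤ t ^ (-a) * τ ^ (-a) := by
      rw [show -t * τ = -(t * τ) by ring, ← Real.mul_rpow ht.le hτ0.le]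
      exact exp_le_rpow_neg ha ha1.le (by positivity)
    have step1 : h τ * Real.exp (-t * τ) * s ^ (-r) / (τ + s)
        ≤ M * (t ^ (-a) * τ ^ (-a)) * s ^ (-r) / (τ + s) := by
      gcongr <;> first | exact hhτ.2 | exact hexp | positivity
    refine step1.trans ?_
    show M * (t ^ (-a) * τ ^ (-a)) * s ^ (-r) / (τ + s) ≤ M * t ^ (-a) * s ^ (-r) * G τ
    by_cases hcas : τ ≤ s
    · have : G τ = s⁻¹ * τ ^ (-a) := by simp [hG, hcas]
      rw [this]
      have hinv : (τ + s)⁻¹ ≤ s⁻¹ := by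
        apply inv_anti₀ hs; linarith
      calc M * (t ^ (-a) * τ ^ (-a)) * s ^ (-r) / (τ + s)
          = (M * t ^ (-a) * s ^ (-r) * τ ^ (-a)) * (τ + s)⁻¹ := by ring
        _ ≤ (M * t ^ (-a) * s ^ (-r) * τ ^ (-a)) * s⁻¹ := by
            apply mul_le_mul_of_nonneg_left hinv; positivity
        _ = M * t ^ (-a) * s ^ (-r) * (s⁻¹ * τ ^ (-a)) := by ring
    · have : G τ = τ ^ (-(a+1)) := by simp [hG, hcas]
      rw [this]
      have hinv : (τ + s)⁻¹ ≤ τ⁻¹ := by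
        apply inv_anti₀ hτ0; linarith
      have hτa : τ ^ (-(a+1)) = τ ^ (-a) * τ⁻¹ := by
        rw [show -(a+1) = -a + (-1) by ring, Real.rpow_add hτ0, Real.rpow_neg_one]
      calc M * (t ^ (-a) * τ ^ (-a)) * s ^ (-r) / (τ + s)
          = (M * t ^ (-a) * s ^ (-r) * τ ^ (-a)) * (τ + s)⁻¹ := by ring
        _ ≤ (M * t ^ (-a) * s ^ (-r) * τ ^ (-a)) * τ⁻¹ := by
            apply mul_le_mul_of_nonneg_left hinv; positivity
        _ = M * t ^ (-a) * s ^ (-r) * τ ^ (-(a+1)) := by rw [hτa]; ring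
  have := norm_integral_le_of_norm_le hHint hbound
  refine this.trans ?_
  have : ∫ τ in Ioi (0:ℝ), H τ = M * t ^ (-a) * s ^ (-r) * ∫ τ in Ioi (0:ℝ), G τ :=
    integral_const_mul _ _
  rw [this, hGval]; ring_nf; rfl

lemma lint_Ioc {K p c : ℝ} (hK : 0 ≤ K) (hp : -1 < p) (hc : 0 < c) :
    ∫⁻ s in Ioc (0:ℝ) c, ENNReal.ofReal (K * s ^ p)
      = ENNReal.ofReal (K * (c ^ (p+1) / (p+1))) := by
  have hint : IntegrableOn (fun s : ℝ => K * s ^ p) (Ioc 0 c) volume :=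
    ((intervalIntegral.intervalIntegrable_rpow' (a := 0) (b := c) hp).1).const_mul K
  have hnn : 0 ≤ᵐ[volume.restrict (Ioc (0:ℝ) c)] fun s : ℝ => K * s ^ p := by
    filter_upwards [ae_restrict_mem measurableSet_Ioc] with s hs
    have : (0:ℝ) < s := hs.1
    positivity
  rw [← ofReal_integral_eq_lintegral_ofReal hint hnn]
  congr 1
  rw [MeasureTheory.integral_const_mul, ← intervalIntegral.integral_of_le hc.le,
    integral_rpow (Or.inl hp), Real.zero_rpow (by linarith : p + 1 ≠ 0)]
  ring

lemma lint_Ioi {K p c : ℝ} (hK : 0 ≤ K) (hp : p < -1) (hc : 0 < c) :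
    ∫⁻ s in Ioi c, ENNReal.ofReal (K * s ^ p)
      = ENNReal.ofReal (K * (c ^ (p+1) / (-(p+1)))) := by
  have hint : IntegrableOn (fun s : ℝ => K * s ^ p) (Ioi c) volume :=
    (integrableOn_Ioi_rpow_of_lt hp hc).const_mul K
  have hnn : 0 ≤ᵐ[volume.restrict (Ioi c)] fun s : ℝ => K * s ^ p := by
    filter_upwards [ae_restrict_mem measurableSet_Ioi] with s hs
    have : (0:ℝ) < s := hc.trans hs
    positivity
  rw [← ofReal_integral_eq_lintegral_ofReal hint hnn]
  congr 1
  rw [MeasureTheory.integral_const_mul, integral_Ioi_rpow_of_lt hp hc, div_neg, neg_div]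

lemma piece_bound {Q r a s x : ℝ} (hQ : 0 ≤ Q) (hs : 0 < s)
    (hx : ‖x‖ ≤ Q * s ^ (-r) * s ^ (-a)) :
    (‖x‖₊ : ENNReal) ^ (2:ℝ) ≤ ENNReal.ofReal (Q^2 * s ^ (-(2*r+2*a))) := by
  have hy : (0:ℝ) ≤ Q * s ^ (-r) * s ^ (-a) := by positivity
  have h1 : (‖x‖₊ : ENNReal) ^ (2:ℝ)
      ≤ (ENNReal.ofReal (Q * s ^ (-r) * s ^ (-a))) ^ (2:ℝ) := by
    rw [← enorm_eq_nnnorm, ← ofReal_norm]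
    exact ENNReal.rpow_le_rpow (ENNReal.ofReal_le_ofReal hx) (by norm_num)
  refine h1.trans_eq ?_
  rw [ENNReal.ofReal_rpow_of_nonneg hy (by norm_num)]
  congr 1
  have h2 : (Q * s ^ (-r) * s ^ (-a)) ^ (2:ℝ) = (Q * s ^ (-r) * s ^ (-a)) ^ (2:ℕ) := by
    rw [← Real.rpow_natCast]; norm_num
  rw [h2, show -(2*r+2*a) = (-r) + (-a) + ((-r) + (-a)) by ring,
    Real.rpow_add hs, Real.rpow_add hs]
  ring

set_option maxHeartbeats 1000000 in
theorem stmt_10 (M r : ℝ) (hM : 0 ≤ M) (hr : r ∈ Set.Ico (0:ℝ) (1/2)) :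
    ∃ C > (0:ℝ), ∀ h : ℝ → ℝ, Measurable h → (∀ τ : ℝ, 0 < τ → 0 ≤ h τ ∧ h τ ≤ M) →
      ∀ t : ℝ, 0 < t →
        eLpNorm (fun s : ℝ => (1/(2*Real.pi)) * ∫ τ in Set.Ioi (0:ℝ),
            h τ * Real.exp (-t * τ) * s ^ (-r) / (τ + s)) 2 (volume.restrict (Set.Ioi 0))
          ≤ ENNReal.ofReal (C * t ^ (r - 1/2)) := by
  obtain ⟨hr0, hr2⟩ := hr
  have hπ : (0:ℝ) < 2 * Real.pi := by positivity
  set a1 : ℝ := (1 - 2*r)/4 with ha1d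
  set a2 : ℝ := (1 - 2*r)/4 + 1/2 with ha2d
  have ha1p : 0 < a1 := by rw [ha1d]; linarith
  have ha11 : a1 < 1 := by rw [ha1d]; linarith
  have ha2p : 0 < a2 := by rw [ha2d]; linarith
  have ha21 : a2 < 1 := by rw [ha2d]; linarith
  have h1a1 : 0 < 1 - a1 := by linarith
  have h1a2 : 0 < 1 - a2 := by linarith
  set W1 : ℝ := |1/(2*Real.pi)| * (M * (1/(1-a1) + 1/a1)) with hW1d
  set W2 : ℝ := |1/(2*Real.pi)| * (M * (1/(1-a2) + 1/a2)) with hW2d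
  have hW1 : 0 ≤ W1 := by rw [hW1d]; positivity
  have hW2 : 0 ≤ W2 := by rw [hW2d]; positivity
  have h12 : 0 < 1/2 - r := by linarith
  have hr12 : 0 < r + 1/2 := by linarith
  set E : ℝ := W1^2/(1/2 - r) + W2^2/(r+1/2) with hEd
  have hE : 0 ≤ E :=
    add_nonneg (div_nonneg (sq_nonneg _) h12.le) (div_nonneg (sq_nonneg _) hr12.le)
  refine ⟨Real.sqrt E + 1, by positivity, ?_⟩
  intro h hmeas hh t ht
  set T : ℝ := t ^ (r - 1/2) with hTd
  have hT : 0 < T := Real.rpow_pos_of_pos ht _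
  set c : ℝ := t⁻¹ with hcd
  have hc : 0 < c := by rw [hcd]; positivity
  set ψ : ℝ → ℝ := fun s : ℝ => (1/(2*Real.pi)) * ∫ τ in Set.Ioi (0:ℝ),
      h τ * Real.exp (-t * τ) * s ^ (-r) / (τ + s) with hψd
  -- pointwise bound
  have hpsi : ∀ a : ℝ, 0 < a → a < 1 → ∀ s : ℝ, 0 < s →
      ‖ψ s‖ ≤ (|1/(2*Real.pi)| * (M * (1/(1-a) + 1/a)) * t^(-a)) * s^(-r) * s^(-a) := by
    intro a hap ha1' s hs
    have key := key_pointwise (r := r) hM ht hs hap ha1' hh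
    calc ‖ψ s‖ = |1/(2*Real.pi)| *
        ‖∫ τ in Set.Ioi (0:ℝ), h τ * Real.exp (-t * τ) * s ^ (-r) / (τ + s)‖ := by
          rw [show ψ s = (1/(2*Real.pi)) * ∫ τ in Set.Ioi (0:ℝ),
              h τ * Real.exp (-t * τ) * s ^ (-r) / (τ + s) from rfl,
            norm_mul, Real.norm_eq_abs]
      _ ≤ |1/(2*Real.pi)| * ((M * (1/(1-a) + 1/a)) * t^(-a) * s^(-r) * s^(-a)) :=
          mul_le_mul_of_nonneg_left key (abs_nonneg _)
      _ = (|1/(2*Real.pi)| * (M * (1/(1-a) + 1/a)) * t^(-a)) * s^(-r) * s^(-a) := by ring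
  -- rpow arithmetic helpers
  have hmul : ∀ u v : ℝ, t ^ u * t ^ v = t ^ (u+v) := fun u v => (Real.rpow_add ht u v).symm
  have hcpow : ∀ u : ℝ, c ^ u = t ^ (-u) := fun u => by
    rw [hcd, Real.inv_rpow ht.le, ← Real.rpow_neg ht.le]
  -- bounds on the two pieces
  set Q1 : ℝ := W1 * t^(-a1) with hQ1d
  set Q2 : ℝ := W2 * t^(-a2) with hQ2d
  have hQ1 : 0 ≤ Q1 := by rw [hQ1d]; positivity
  have hQ2 : 0 ≤ Q2 := by rw [hQ2d]; positivity
  have hb1 : ∫⁻ s in Ioc (0:ℝ) c, (‖ψ s‖₊ : ENNReal) ^ (2:ℝ)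
      ≤ ENNReal.ofReal (Q1^2 * (c ^ (-(2*r+2*a1)+1) / (-(2*r+2*a1)+1))) := by
    calc ∫⁻ s in Ioc (0:ℝ) c, (‖ψ s‖₊ : ENNReal) ^ (2:ℝ)
        ≤ ∫⁻ s in Ioc (0:ℝ) c, ENNReal.ofReal (Q1^2 * s ^ (-(2*r+2*a1))) := by
          refine setLIntegral_mono (by fun_prop) ?_
          intro s hs
          exact piece_bound hQ1 hs.1 (by
            have := hpsi a1 ha1p ha11 s hs.1
            rwa [← hW1d, ← hQ1d] at this)
      _ = _ := lint_Ioc (by positivity) (by rw [ha1d]; linarith) hc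
  have hb2 : ∫⁻ s in Ioi c, (‖ψ s‖₊ : ENNReal) ^ (2:ℝ)
      ≤ ENNReal.ofReal (Q2^2 * (c ^ (-(2*r+2*a2)+1) / (-(-(2*r+2*a2)+1)))) := by
    calc ∫⁻ s in Ioi c, (‖ψ s‖₊ : ENNReal) ^ (2:ℝ)
        ≤ ∫⁻ s in Ioi c, ENNReal.ofReal (Q2^2 * s ^ (-(2*r+2*a2))) := by
          refine setLIntegral_mono (by fun_prop) ?_
          intro s hs
          exact piece_bound hQ2 (hc.trans hs) (by
            have := hpsi a2 ha2p ha21 s (hc.trans hs)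
            rwa [← hW2d, ← hQ2d] at this)
      _ = _ := lint_Ioi (by positivity) (by rw [ha2d]; linarith) hc
  -- evaluate the real quantities
  have ha1T : t^(-a1) * t^(-a1) = T := by
    rw [hmul, hTd]; congr 1; rw [ha1d]; ring
  have hc1 : c ^ (-(2*r+2*a1)+1) = T := by
    rw [hcpow, hTd]; congr 1; rw [ha1d]; ring
  have hq1 : -(2*r+2*a1)+1 = 1/2 - r := by rw [ha1d]; ring
  have hA1 : Q1^2 * (c ^ (-(2*r+2*a1)+1) / (-(2*r+2*a1)+1)) = W1^2/(1/2-r) * T^2 := by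
    rw [hc1, hq1, hQ1d, mul_pow, pow_two (t^(-a1)), ha1T, pow_two T]; ring
  have hA2 : Q2^2 * (c ^ (-(2*r+2*a2)+1) / (-(-(2*r+2*a2)+1))) = W2^2/(r+1/2) * T^2 := by
    have hc2 : c ^ (-(2*r+2*a2)+1) = t ^ (r+1/2) := by
      rw [hcpow]; congr 1; rw [ha2d]; ring
    have ht2 : t^(-a2) * t^(-a2) = t ^ (r - 3/2) := by
      rw [hmul]; congr 1; rw [ha2d]; ring
    have ht3 : t ^ (r-3/2) * t ^ (r+1/2) = T^2 := by
      rw [hTd, hmul, pow_two, hmul]; congr 1; ring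
    have hq2 : -(-(2*r+2*a2)+1) = r + 1/2 := by rw [ha2d]; ring
    rw [hc2, hq2, hQ2d, mul_pow, pow_two (t^(-a2)), ht2, ← ht3]; ring
  -- total bound on the lintegral
  have htot : ∫⁻ s in Ioi (0:ℝ), (‖ψ s‖₊ : ENNReal) ^ (2:ℝ)
      ≤ ENNReal.ofReal (((Real.sqrt E + 1) * T)^2) := by
    rw [← Set.Ioc_union_Ioi_eq_Ioi hc.le,
      lintegral_union measurableSet_Ioi (Set.Ioc_disjoint_Ioi le_rfl)]
    refine (add_le_add hb1 hb2).trans ?_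
    rw [hA1, hA2, ← ENNReal.ofReal_add (by positivity) (by positivity)]
    apply ENNReal.ofReal_le_ofReal
    have hEsq : E ≤ (Real.sqrt E + 1)^2 := by
      nlinarith [Real.sq_sqrt hE, Real.sqrt_nonneg E]
    calc W1^2/(1/2-r) * T^2 + W2^2/(r+1/2) * T^2 = E * T^2 := by rw [hEd]; ring
      _ ≤ (Real.sqrt E + 1)^2 * T^2 := by nlinarith [sq_nonneg T]
      _ = ((Real.sqrt E + 1) * T)^2 := by ring
  -- finish
  rw [eLpNorm_eq_lintegral_rpow_enorm_toReal (by norm_num) (by norm_num)]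
  simp only [ENNReal.toReal_ofNat]
  calc (∫⁻ s in Ioi (0:ℝ), (‖ψ s‖₊ : ENNReal) ^ (2:ℝ)) ^ (1/(2:ℝ))
      ≤ (ENNReal.ofReal (((Real.sqrt E + 1) * T)^2)) ^ (1/(2:ℝ)) :=
        ENNReal.rpow_le_rpow htot (by norm_num)
    _ = ENNReal.ofReal ((((Real.sqrt E + 1) * T)^2) ^ ((1/2 : ℝ))) :=
        ENNReal.ofReal_rpow_of_nonneg (by positivity) (by norm_num)
    _ = ENNReal.ofReal ((Real.sqrt E + 1) * T) := by
        rw [← Real.sqrt_eq_rpow, Real.sqrt_sq (by positivity)]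
    _ = ENNReal.ofReal ((Real.sqrt E + 1) * t ^ (r - 1/2)) := by rw [hTd]
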